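/- Let √2 − 1 < α < 1, let X be an ℕ-valued random variable satisfying the recursive distributional equation, and set s_p := ((2 − p − αp) − √((2 − p − αp)² − 4αp(2−p)))/(2α(2−p)). Then s_p ∈ (0,1), and the probability generating function satisfies G(s) = Q₋(s) for all s ∈ [s_p, 1] and G(s) = Q₊(s) for all s ∈ [0, s_p). -/

import Mathlib

set_option maxHeartbeats 1000000


open scoped ENNReal

/-- The Poisson(α) probability mass function on ℕ. -/
noncomputable def poissonPMF (α : ℝ) (k : ℕ) : ℝ≥0∞ :=
  ENNReal.ofReal (Real.exp (-α) * α ^ k / (Nat.factorial k))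

/-- The Geometric(1/2) pmf: P(N = k) = (1/2)^(k+1) for k ≥ 0. -/
noncomputable def geomHalf (k : ℕ) : ℝ≥0∞ := (1 / 2) ^ (k + 1)

/-- The law of (X - 1)⁺ when X has law μ on ℕ. -/
noncomputable def shiftLaw (μ : ℕ → ℝ≥0∞) (k : ℕ) : ℝ≥0∞ :=
  if k = 0 then μ 0 + μ 1 else μ (k + 1)

/-- Convolution of two (sub-)pmfs on ℕ: the law of an independent sum. -/
noncomputable def convAdd (f g : ℕ → ℝ≥0∞) (k : ℕ) : ℝ≥0∞ :=
  ∑ j ∈ Finset.range (k + 1), f j * g (k - j)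

/-- n-fold convolution of a pmf on ℕ: the law of a sum of n i.i.d. copies. -/
noncomputable def iterConv (f : ℕ → ℝ≥0∞) : ℕ → ℕ → ℝ≥0∞
  | 0 => fun k => if k = 0 then 1 else 0
  | n + 1 => convAdd (iterConv f n) f

/-- μ is the law of an ℕ-valued random variable X satisfying the RDE
    X =_d P + ∑_{i=1}^N (X_i - 1)⁺, with P ~ Poisson(α), N ~ Geom(1/2),
    X_i i.i.d. with law μ, all independent. -/
def SatisfiesRDE (α : ℝ) (μ : ℕ → ℝ≥0∞) : Prop :=
  (∑' k, μ k) = 1 ∧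
  ∀ k, μ k = ∑' n, geomHalf n * convAdd (poissonPMF α) (iterConv (shiftLaw μ) n) k

/-- The probability generating function G(s) = E[s^X]. -/
noncomputable def pgf (μ : ℕ → ℝ≥0∞) (s : ℝ) : ℝ := ∑' k, (μ k).toReal * s ^ k

/-- The mean E[X] = ∑ k · P(X = k), valued in [0,∞]. -/
noncomputable def meanENN (μ : ℕ → ℝ≥0∞) : ℝ≥0∞ := ∑' k : ℕ, (k : ℝ≥0∞) * μ k

/-! ## Part A: generating function machinery in ℝ≥0∞ -/

noncomputable def phiE (f : ℕ → ℝ≥0∞) (x : ℝ≥0∞) : ℝ≥0∞ := ∑' k, f k * x ^ k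

lemma phiE_conv (f g : ℕ → ℝ≥0∞) (x : ℝ≥0∞) :
    phiE (convAdd f g) x = phiE f x * phiE g x := by
  unfold phiE convAdd
  rw [← ENNReal.tsum_mul_right,
    tsum_congr (fun i => (ENNReal.tsum_mul_left (a := f i * x ^ i) (f := fun j => g j * x ^ j)).symm),
    ← ENNReal.tsum_prod (f := fun i j => f i * x ^ i * (g j * x ^ j))]
  rw [← Finset.HasAntidiagonal.sigmaAntidiagonalEquivProd.tsum_eq (fun z : ℕ × ℕ => f z.1 * x ^ z.1 * (g z.2 * x ^ z.2))]
  rw [ENNReal.tsum_sigma']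
  congr 1
  ext n
  rw [tsum_fintype]
  simp only [Finset.HasAntidiagonal.sigmaAntidiagonalEquivProd_apply]
  rw [Finset.sum_coe_sort (Finset.HasAntidiagonal.antidiagonal n) (fun kl : ℕ × ℕ => f kl.1 * x ^ kl.1 * (g kl.2 * x ^ kl.2)),
    ← Finset.Nat.sum_antidiagonal_eq_sum_range_succ (f := fun k l => f k * g l),
    Finset.sum_mul]
  apply Finset.sum_congr rfl
  intro kl hkl
  rw [Finset.HasAntidiagonal.mem_antidiagonal] at hkl
  rw [← hkl, pow_add]
  ring

lemma phiE_iter (f : ℕ → ℝ≥0∞) (x : ℝ≥0∞) (n : ℕ) :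
    phiE (iterConv f n) x = (phiE f x) ^ n := by
  induction n with
  | zero =>
    unfold phiE iterConv
    rw [pow_zero]
    rw [tsum_eq_single 0 (by intro k hk; simp [hk])]
    simp
  | succ n ih =>
    show phiE (convAdd (iterConv f n) f) x = _
    rw [phiE_conv, ih, pow_succ]

lemma phiE_poisson {α s : ℝ} (hα : 0 ≤ α) (hs : 0 ≤ s) :
    phiE (poissonPMF α) (ENNReal.ofReal s) = ENNReal.ofReal (Real.exp (α * (s - 1))) := by
  unfold phiE poissonPMF
  have hsum : Summable (fun k : ℕ => Real.exp (-α) * α ^ k / (Nat.factorial k) * s ^ k) := by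
    have := (Real.summable_pow_div_factorial (α * s)).mul_left (Real.exp (-α))
    apply this.congr
    intro k
    rw [mul_pow]
    ring
  have h1 : ∀ k : ℕ, ENNReal.ofReal (Real.exp (-α) * α ^ k / (Nat.factorial k)) *
      (ENNReal.ofReal s) ^ k
      = ENNReal.ofReal (Real.exp (-α) * α ^ k / (Nat.factorial k) * s ^ k) := by
    intro k
    rw [← ENNReal.ofReal_pow hs, ← ENNReal.ofReal_mul]
    positivity
  rw [tsum_congr h1, ← ENNReal.ofReal_tsum_of_nonneg (fun k => by positivity) hsum]
  congr 1
  have : ∀ k : ℕ, Real.exp (-α) * α ^ k / (Nat.factorial k) * s ^ k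
      = Real.exp (-α) * ((α * s) ^ k / (Nat.factorial k)) := by
    intro k; rw [mul_pow]; ring
  rw [tsum_congr this, tsum_mul_left]
  have : ∑' k : ℕ, (α * s) ^ k / (Nat.factorial k) = Real.exp (α * s) := by
    rw [Real.exp_eq_exp_ℝ, NormedSpace.exp_eq_tsum_div]
  rw [this, ← Real.exp_add]
  congr 1
  ring

lemma tsum_shiftLaw (μ : ℕ → ℝ≥0∞) : ∑' k, shiftLaw μ k = ∑' k, μ k := by
  have hks : ∀ k : ℕ, shiftLaw μ (k + 1) = μ (k + 1 + 1) := fun k => rfl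
  rw [tsum_eq_zero_add' (f := shiftLaw μ) ENNReal.summable, tsum_congr hks,
    tsum_eq_zero_add' (f := μ) ENNReal.summable,
    tsum_eq_zero_add' (f := fun k => μ (k + 1)) ENNReal.summable]
  show μ 0 + μ 1 + _ = _
  ring

lemma phiE_le_tsum {f : ℕ → ℝ≥0∞} {x : ℝ≥0∞} (hx : x ≤ 1) : phiE f x ≤ ∑' k, f k := by
  apply ENNReal.tsum_le_tsum
  intro k
  calc f k * x ^ k ≤ f k * 1 ^ k := by
        gcongr
      _ = f k := by simp

lemma phiE_shift_eq (μ : ℕ → ℝ≥0∞) (x : ℝ≥0∞) :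
    x * phiE (shiftLaw μ) x + μ 0 = phiE μ x + μ 0 * x := by
  have hL : x * phiE (shiftLaw μ) x = (μ 0 + μ 1) * x + ∑' k, μ (k + 1 + 1) * x ^ (k + 1 + 1) := by
    unfold phiE
    rw [← ENNReal.tsum_mul_left, tsum_eq_zero_add' ENNReal.summable]
    have h0 : x * (shiftLaw μ 0 * x ^ 0) = (μ 0 + μ 1) * x := by
      show x * ((μ 0 + μ 1) * x ^ 0) = _
      ring
    have hks : ∀ k : ℕ, x * (shiftLaw μ (k + 1) * x ^ (k + 1)) = μ (k + 1 + 1) * x ^ (k + 1 + 1) := by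
      intro k
      show x * (μ (k + 1 + 1) * x ^ (k + 1)) = _
      ring
    rw [h0, tsum_congr hks]
  have hR : phiE μ x = μ 0 + μ 1 * x + ∑' k, μ (k + 1 + 1) * x ^ (k + 1 + 1) := by
    unfold phiE
    rw [tsum_eq_zero_add' ENNReal.summable,
      tsum_eq_zero_add' (f := fun k => μ (k + 1) * x ^ (k + 1)) ENNReal.summable]
    simp only [pow_zero, mul_one, pow_one]
    ring
  rw [hL, hR]
  ring

lemma phiE_rde {α : ℝ} {μ : ℕ → ℝ≥0∞} (hμ : SatisfiesRDE α μ) (x : ℝ≥0∞) :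
    2 * phiE μ x = phiE (poissonPMF α) x
      + phiE (shiftLaw μ) x * phiE μ x := by
  set C := phiE (poissonPMF α) x with hC
  set H := phiE (shiftLaw μ) x with hH
  set S := ∑' n : ℕ, geomHalf n * H ^ n with hS
  have hGS : phiE μ x = C * S := by
    conv_lhs => rw [phiE, tsum_congr (fun k => by rw [hμ.2 k, ← ENNReal.tsum_mul_right])]
    rw [ENNReal.tsum_comm]
    rw [tsum_congr (fun n => ?_), hS, ENNReal.tsum_mul_left]
    have : ∀ k, geomHalf n * convAdd (poissonPMF α) (iterConv (shiftLaw μ) n) k * x ^ k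
        = geomHalf n * (convAdd (poissonPMF α) (iterConv (shiftLaw μ) n) k * x ^ k) := by
      intro k; ring
    rw [tsum_congr this, ENNReal.tsum_mul_left]
    show geomHalf n * phiE (convAdd (poissonPMF α) (iterConv (shiftLaw μ) n)) x = _
    rw [phiE_conv, phiE_iter]
    ring
  have h2S : 2 * S = 1 + H * S := by
    have hcan : (2 : ℝ≥0∞)⁻¹ * 2 = 1 := ENNReal.inv_mul_cancel two_ne_zero ENNReal.ofNat_ne_top
    have e1 : 2 * S = ∑' n : ℕ, (2 : ℝ≥0∞)⁻¹ ^ n * H ^ n := by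
      rw [hS, ← ENNReal.tsum_mul_left]
      apply tsum_congr
      intro n
      unfold geomHalf
      rw [one_div, pow_succ]
      calc (2 : ℝ≥0∞) * (2⁻¹ ^ n * 2⁻¹ * H ^ n) = 2⁻¹ ^ n * H ^ n * (2⁻¹ * 2) := by ring
        _ = 2⁻¹ ^ n * H ^ n := by rw [hcan, mul_one]
    rw [e1, tsum_eq_zero_add' ENNReal.summable]
    simp only [pow_zero, one_mul]
    congr 1
    rw [hS, ← ENNReal.tsum_mul_left]
    apply tsum_congr
    intro n
    unfold geomHalf
    rw [one_div]
    ring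
  calc 2 * phiE μ x = C * (2 * S) := by rw [hGS]; ring
    _ = C + H * (C * S) := by rw [h2S]; ring
    _ = C + H * phiE μ x := by rw [hGS]

lemma mu_ne_top {μ : ℕ → ℝ≥0∞} (h1 : (∑' k, μ k) = 1) (k : ℕ) : μ k ≠ ⊤ := by
  have : μ k ≤ 1 := h1 ▸ ENNReal.le_tsum k
  exact ne_top_of_le_ne_top ENNReal.one_ne_top this

lemma mu_le_one {μ : ℕ → ℝ≥0∞} (h1 : (∑' k, μ k) = 1) (k : ℕ) : μ k ≤ 1 :=
  h1 ▸ ENNReal.le_tsum k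

lemma phiE_toReal {μ : ℕ → ℝ≥0∞} (h1 : (∑' k, μ k) = 1) {s : ℝ} (hs : 0 ≤ s) :
    (phiE μ (ENNReal.ofReal s)).toReal = pgf μ s := by
  unfold phiE pgf
  rw [ENNReal.tsum_toReal_eq]
  · apply tsum_congr
    intro k
    rw [ENNReal.toReal_mul, ENNReal.toReal_pow, ENNReal.toReal_ofReal hs]
  · intro k
    exact ENNReal.mul_ne_top (mu_ne_top h1 k)
      (ENNReal.pow_ne_top ENNReal.ofReal_ne_top)

lemma pgf_quadratic {α : ℝ} {μ : ℕ → ℝ≥0∞} (hμ : SatisfiesRDE α μ) (hα : 0 ≤ α)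
    {s : ℝ} (hs0 : 0 ≤ s) (hs1 : s ≤ 1) :
    (pgf μ s) ^ 2 - ((2 - (μ 0).toReal) * s + (μ 0).toReal) * pgf μ s
      + s * Real.exp (α * (s - 1)) = 0 := by
  set x := ENNReal.ofReal s with hxdef
  have hx1 : x ≤ 1 := ENNReal.ofReal_le_one.mpr hs1
  set G := phiE μ x with hGdef
  set H := phiE (shiftLaw μ) x with hHdef
  set C := phiE (poissonPMF α) x with hCdef
  have hCval : C = ENNReal.ofReal (Real.exp (α * (s - 1))) := phiE_poisson hα hs0
  have hGle : G ≤ 1 := le_trans (phiE_le_tsum hx1) (le_of_eq hμ.1)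
  have hHle : H ≤ 1 := le_trans (phiE_le_tsum hx1) (le_of_eq ((tsum_shiftLaw μ).trans hμ.1))
  have hGt : G ≠ ⊤ := ne_top_of_le_ne_top ENNReal.one_ne_top hGle
  have hHt : H ≠ ⊤ := ne_top_of_le_ne_top ENNReal.one_ne_top hHle
  have hCt : C ≠ ⊤ := hCval ▸ ENNReal.ofReal_ne_top
  have hxt : x ≠ ⊤ := ENNReal.ofReal_ne_top
  have hμ0t : μ 0 ≠ ⊤ := mu_ne_top hμ.1 0
  -- main ENNReal identity
  have hrde : 2 * G = C + H * G := phiE_rde hμ x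
  have hshift : x * H + μ 0 = G + μ 0 * x := phiE_shift_eq μ x
  have key : 2 * G * x + μ 0 * G = C * x + G ^ 2 + μ 0 * x * G := by
    have e1 : (2 * G) * x + μ 0 * G = (C + H * G) * x + μ 0 * G := by rw [hrde]
    have e2 : (x * H + μ 0) * G = (G + μ 0 * x) * G := by rw [hshift]
    calc 2 * G * x + μ 0 * G
        = C * x + ((x * H + μ 0) * G) := by rw [e1]; ring
      _ = C * x + ((G + μ 0 * x) * G) := by rw [e2]
      _ = C * x + G ^ 2 + μ 0 * x * G := by ring
  -- take toReal
  have hGr : G.toReal = pgf μ s := phiE_toReal hμ.1 hs0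
  have hxr : x.toReal = s := ENNReal.toReal_ofReal hs0
  have hCr : C.toReal = Real.exp (α * (s - 1)) := by
    rw [hCval, ENNReal.toReal_ofReal (Real.exp_nonneg _)]
  have h2t : (2 : ℝ≥0∞) ≠ ⊤ := ENNReal.ofNat_ne_top
  have := congrArg ENNReal.toReal key
  have f1 : 2 * G * x ≠ ⊤ := ENNReal.mul_ne_top (ENNReal.mul_ne_top h2t hGt) hxt
  have f2 : μ 0 * G ≠ ⊤ := ENNReal.mul_ne_top hμ0t hGt
  have f3 : C * x ≠ ⊤ := ENNReal.mul_ne_top hCt hxt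
  have f4 : G ^ 2 ≠ ⊤ := ENNReal.pow_ne_top hGt
  have f5 : μ 0 * x * G ≠ ⊤ := ENNReal.mul_ne_top (ENNReal.mul_ne_top hμ0t hxt) hGt
  rw [ENNReal.toReal_add f1 f2, ENNReal.toReal_add (ENNReal.add_ne_top.mpr ⟨f3, f4⟩) f5,
    ENNReal.toReal_add f3 f4] at this
  simp only [ENNReal.toReal_mul, ENNReal.toReal_pow, ENNReal.toReal_ofNat] at this
  rw [hGr, hxr, hCr] at this
  nlinarith [this]

/-! ## Part B: real pgf basics -/

lemma summable_mu_toReal {μ : ℕ → ℝ≥0∞} (h1 : (∑' k, μ k) = 1) :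
    Summable fun k => (μ k).toReal :=
  ENNReal.summable_toReal (by rw [h1]; exact ENNReal.one_ne_top)

lemma tsum_mu_toReal {μ : ℕ → ℝ≥0∞} (h1 : (∑' k, μ k) = 1) :
    ∑' k, (μ k).toReal = 1 := by
  rw [← ENNReal.tsum_toReal_eq (mu_ne_top h1), h1, ENNReal.toReal_one]

lemma summable_pgf_term {μ : ℕ → ℝ≥0∞} (h1 : (∑' k, μ k) = 1) {s : ℝ}
    (hs0 : 0 ≤ s) (hs1 : s ≤ 1) : Summable fun k => (μ k).toReal * s ^ k := by
  apply Summable.of_nonneg_of_le (fun k => by positivity)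
    (fun k => ?_) (summable_mu_toReal h1)
  calc (μ k).toReal * s ^ k ≤ (μ k).toReal * 1 := by
        gcongr
        exact pow_le_one₀ hs0 hs1
    _ = (μ k).toReal := mul_one _

lemma pgf_zero (μ : ℕ → ℝ≥0∞) : pgf μ 0 = (μ 0).toReal := by
  unfold pgf
  rw [tsum_eq_single 0 (fun k hk => by simp [zero_pow hk])]
  simp

lemma pgf_one {μ : ℕ → ℝ≥0∞} (h1 : (∑' k, μ k) = 1) : pgf μ 1 = 1 := by
  unfold pgf
  simp only [one_pow, mul_one]
  exact tsum_mu_toReal h1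

lemma pgf_le_one {μ : ℕ → ℝ≥0∞} (h1 : (∑' k, μ k) = 1) {s : ℝ}
    (hs0 : 0 ≤ s) (hs1 : s ≤ 1) : pgf μ s ≤ 1 := by
  unfold pgf
  rw [← tsum_mu_toReal h1]
  apply Summable.tsum_le_tsum _ (summable_pgf_term h1 hs0 hs1) (summable_mu_toReal h1)
  intro k
  calc (μ k).toReal * s ^ k ≤ (μ k).toReal * 1 := by
        gcongr
        exact pow_le_one₀ hs0 hs1
    _ = (μ k).toReal := mul_one _

lemma pgf_ge_p {μ : ℕ → ℝ≥0∞} (h1 : (∑' k, μ k) = 1) {s : ℝ}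
    (hs0 : 0 ≤ s) (hs1 : s ≤ 1) : (μ 0).toReal ≤ pgf μ s := by
  have := Summable.le_tsum (summable_pgf_term h1 hs0 hs1) 0 (fun k _ => by positivity)
  simpa [pgf] using this

lemma pgf_continuousOn {μ : ℕ → ℝ≥0∞} (h1 : (∑' k, μ k) = 1) :
    ContinuousOn (pgf μ) (Set.Icc 0 1) := by
  have := tendstoUniformlyOn_tsum (f := fun k (x : ℝ) => (μ k).toReal * x ^ k)
    (summable_mu_toReal h1) (s := Set.Icc (0:ℝ) 1) (fun k x hx => ?_)
  · exact this.continuousOn (Filter.Frequently.of_forall fun t =>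
      (continuousOn_finset_sum t fun k _ => (continuous_const.mul (continuous_pow k)).continuousOn))
  · rcases hx with ⟨hx0, hx1⟩
    rw [Real.norm_eq_abs, abs_mul, abs_of_nonneg ENNReal.toReal_nonneg, abs_of_nonneg (by positivity)]
    calc (μ k).toReal * x ^ k ≤ (μ k).toReal * 1 := by
          gcongr
          exact pow_le_one₀ hx0 hx1
      _ = (μ k).toReal := mul_one _

/-! ## Part C: bounds on p -/

lemma mu0_pos {α : ℝ} {μ : ℕ → ℝ≥0∞} (hμ : SatisfiesRDE α μ) : 0 < (μ 0).toReal := by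
  apply ENNReal.toReal_pos _ (mu_ne_top hμ.1 0)
  have h0 : geomHalf 0 * convAdd (poissonPMF α) (iterConv (shiftLaw μ) 0) 0 ≤ μ 0 := by
    rw [hμ.2 0]
    exact ENNReal.le_tsum 0
  have hc : convAdd (poissonPMF α) (iterConv (shiftLaw μ) 0) 0 = poissonPMF α 0 := by
    unfold convAdd iterConv
    simp
  rw [hc] at h0
  intro hz
  rw [hz] at h0
  have : geomHalf 0 * poissonPMF α 0 = 0 := le_antisymm h0 zero_le
  rw [mul_eq_zero] at this
  rcases this with h | h
  · unfold geomHalf at h; simp at h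
  · unfold poissonPMF at h
    rw [ENNReal.ofReal_eq_zero] at h
    have : (0:ℝ) < Real.exp (-α) * α ^ 0 / (Nat.factorial 0) := by positivity
    linarith

lemma mu1_pos {α : ℝ} {μ : ℕ → ℝ≥0∞} (hμ : SatisfiesRDE α μ) (hα : 0 < α) :
    0 < (μ 1).toReal := by
  apply ENNReal.toReal_pos _ (mu_ne_top hμ.1 1)
  have h0 : geomHalf 0 * convAdd (poissonPMF α) (iterConv (shiftLaw μ) 0) 1 ≤ μ 1 := by
    rw [hμ.2 1]
    exact ENNReal.le_tsum 0
  have hc : convAdd (poissonPMF α) (iterConv (shiftLaw μ) 0) 1 = poissonPMF α 1 := by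
    unfold convAdd iterConv
    rw [Finset.sum_range_succ, Finset.sum_range_one]
    norm_num
  rw [hc] at h0
  intro hz
  rw [hz] at h0
  have : geomHalf 0 * poissonPMF α 1 = 0 := le_antisymm h0 zero_le
  rw [mul_eq_zero] at this
  rcases this with h | h
  · unfold geomHalf at h; simp at h
  · unfold poissonPMF at h
    rw [ENNReal.ofReal_eq_zero] at h
    have : (0:ℝ) < Real.exp (-α) * α ^ 1 / (Nat.factorial 1) := by positivity
    linarith

lemma mu0_lt_one {α : ℝ} {μ : ℕ → ℝ≥0∞} (hμ : SatisfiesRDE α μ) (hα : 0 < α) :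
    (μ 0).toReal < 1 := by
  have hsum : μ 0 + μ 1 ≤ 1 := by
    rw [← hμ.1]
    have := ENNReal.sum_le_tsum (f := μ) {0, 1}
    simpa using this
  have htr : (μ 0).toReal + (μ 1).toReal ≤ 1 := by
    rw [← ENNReal.toReal_add (mu_ne_top hμ.1 0) (mu_ne_top hμ.1 1)]
    calc (μ 0 + μ 1).toReal ≤ (1 : ℝ≥0∞).toReal :=
          ENNReal.toReal_mono ENNReal.one_ne_top hsum
      _ = 1 := ENNReal.toReal_one
  linarith [mu1_pos hμ hα]

/-! ## Part D: calculus toolkit -/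

noncomputable def DD (α p s : ℝ) : ℝ := ((2-p)*s+p)^2 - 4*s*Real.exp (α*(s-1))
noncomputable def Dd (α p s : ℝ) : ℝ := 2*((2-p)*s+p)*(2-p) - 4*(Real.exp (α*(s-1))*(1+α*s))
noncomputable def Ddd (α p s : ℝ) : ℝ := 2*(2-p)^2 - 4*(Real.exp (α*(s-1))*(2*α+α^2*s))
noncomputable def qq (α p s : ℝ) : ℝ := α*(2-p)*s^2 - (2-p-α*p)*s + p
noncomputable def EE (α p s : ℝ) : ℝ :=
  2*Real.log ((2-p)*s+p) - Real.log 4 - Real.log s - α*(s-1)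

lemma hasDerivAt_exp_aff (α s : ℝ) :
    HasDerivAt (fun t => Real.exp (α*(t-1))) (Real.exp (α*(s-1)) * α) s := by
  have hin : HasDerivAt (fun t : ℝ => α*(t-1)) α s := by
    simpa using ((hasDerivAt_id s).sub_const 1).const_mul α
  exact (Real.hasDerivAt_exp (α*(s-1))).comp s hin

lemma hasDerivAt_bb (p s : ℝ) : HasDerivAt (fun t => (2-p)*t+p) (2-p) s := by
  simpa using ((hasDerivAt_id s).const_mul (2-p)).add_const p

lemma hasDerivAt_DD (α p s : ℝ) : HasDerivAt (DD α p) (Dd α p s) s := by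
  have h1 : HasDerivAt (fun t => ((2-p)*t+p)^2) (2*((2-p)*s+p)*(2-p)) s := by
    have := (hasDerivAt_bb p s).fun_pow 2
    simpa [mul_comm, mul_assoc, mul_left_comm] using this
  have h2 : HasDerivAt (fun t => 4*t*Real.exp (α*(t-1)))
      (4*(Real.exp (α*(s-1))*(1+α*s))) s := by
    have hmul : HasDerivAt (fun t : ℝ => t*Real.exp (α*(t-1)))
        (1*Real.exp (α*(s-1)) + s*(Real.exp (α*(s-1))*α)) s :=
      (hasDerivAt_id s).mul (hasDerivAt_exp_aff α s)
    have := hmul.const_mul 4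
    have heq : 4*(1*Real.exp (α*(s-1)) + s*(Real.exp (α*(s-1))*α))
        = 4*(Real.exp (α*(s-1))*(1+α*s)) := by ring
    rw [heq] at this
    apply this.congr_of_eventuallyEq
    filter_upwards with t
    ring
  exact h1.sub h2

lemma hasDerivAt_Dd (α p s : ℝ) : HasDerivAt (Dd α p) (Ddd α p s) s := by
  have h1 : HasDerivAt (fun t => 2*((2-p)*t+p)*(2-p)) (2*(2-p)^2) s := by
    have := ((hasDerivAt_bb p s).const_mul 2).mul_const (2-p)
    have heq : 2*(2-p)*(2-p) = 2*(2-p)^2 := by ring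
    rw [heq] at this
    apply this.congr_of_eventuallyEq
    filter_upwards with t
    ring
  have h2 : HasDerivAt (fun t => 4*(Real.exp (α*(t-1))*(1+α*t)))
      (4*(Real.exp (α*(s-1))*(2*α+α^2*s))) s := by
    have hlin : HasDerivAt (fun t : ℝ => 1+α*t) α s := by
      simpa using ((hasDerivAt_id s).const_mul α).const_add 1
    have hmul : HasDerivAt (fun t : ℝ => Real.exp (α*(t-1))*(1+α*t))
        (Real.exp (α*(s-1))*α*(1+α*s) + Real.exp (α*(s-1))*α) s :=
      (hasDerivAt_exp_aff α s).mul hlin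
    have := hmul.const_mul 4
    have heq : 4*(Real.exp (α*(s-1))*α*(1+α*s) + Real.exp (α*(s-1))*α)
        = 4*(Real.exp (α*(s-1))*(2*α+α^2*s)) := by ring
    rw [heq] at this
    exact this
  exact h1.sub h2

lemma hasDerivAt_EE (α p : ℝ) {s : ℝ} (hb : 0 < (2-p)*s+p) (hs : 0 < s) :
    HasDerivAt (EE α p) (-qq α p s/(((2-p)*s+p)*s)) s := by
  have h1 : HasDerivAt (fun t => 2*Real.log ((2-p)*t+p)) (2*((2-p)/((2-p)*s+p))) s := by
    exact (((hasDerivAt_bb p s).log (ne_of_gt hb)).const_mul 2)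
  have h3 : HasDerivAt (fun t : ℝ => Real.log t) (1/s) s := by
    simpa [one_div] using Real.hasDerivAt_log (ne_of_gt hs)
  have h4 : HasDerivAt (fun t : ℝ => α*(t-1)) α s := by
    simpa using ((hasDerivAt_id s).sub_const 1).const_mul α
  have h := ((h1.sub_const (Real.log 4)).sub h3).sub h4
  have heq : 2*((2-p)/((2-p)*s+p)) - 1/s - α = -qq α p s/(((2-p)*s+p)*s) := by
    unfold qq
    field_simp
    ring
  rw [heq] at h
  exact h

lemma slope_le_zero_left {f : ℝ → ℝ} {f' : ℝ} (hf : HasDerivAt f f' 1) (h0 : f 1 = 0)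
    (hnn : ∀ s, 0 < s → s < 1 → 0 ≤ f s) : f' ≤ 0 := by
  have htend : Filter.Tendsto (slope f 1) (nhdsWithin 1 (Set.Iio 1)) (nhds f') := by
    have := hasDerivAt_iff_tendsto_slope.mp hf
    exact this.mono_left (nhdsWithin_mono 1 (fun x hx => ne_of_lt hx))
  have hev : ∀ᶠ s in nhdsWithin 1 (Set.Iio 1), slope f 1 s ≤ 0 := by
    filter_upwards [Ioo_mem_nhdsLT_of_mem
      (show (1:ℝ) ∈ Set.Ioc (0:ℝ) 1 from ⟨by norm_num, le_refl 1⟩)] with s hs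
    rcases hs with ⟨hs0, hs1⟩
    rw [slope_def_field, div_eq_inv_mul]
    apply mul_nonpos_of_nonpos_of_nonneg
    · rw [inv_nonpos]
      linarith
    · rw [h0]
      have := hnn s hs0 hs1
      linarith
  exact le_of_tendsto htend hev

lemma left_interval_of_eventually {P : ℝ → Prop}
    (h : ∀ᶠ s in nhdsWithin 1 (Set.Iio 1), P s) :
    ∃ v : ℝ, 0 ≤ v ∧ v < 1 ∧ ∀ s, v < s → s < 1 → P s := by
  rw [Filter.eventually_iff, mem_nhdsLT_iff_exists_Ioo_subset] at h
  rcases h with ⟨l, hl, hsub⟩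
  refine ⟨max l 0, le_max_right _ _, max_lt hl (by norm_num), fun s hs1 hs2 => ?_⟩
  exact hsub ⟨lt_of_le_of_lt (le_max_left l 0) hs1, hs2⟩

lemma eventually_gt_slope_left {f : ℝ → ℝ} {f' : ℝ} (hf : HasDerivAt f f' 1) (h0 : f 1 = 0)
    (hneg : f' < 0) :
    ∃ v : ℝ, 0 ≤ v ∧ v < 1 ∧ ∀ s, v < s → s < 1 → (-f'/2)*(1-s) < f s := by
  have htend : Filter.Tendsto (slope f 1) (nhdsWithin 1 (Set.Iio 1)) (nhds f') := by
    have := hasDerivAt_iff_tendsto_slope.mp hf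
    exact this.mono_left (nhdsWithin_mono 1 (fun x hx => ne_of_lt hx))
  have hev : ∀ᶠ s in nhdsWithin 1 (Set.Iio 1), slope f 1 s < f'/2 :=
    htend.eventually_lt_const (by linarith)
  have h2 : ∀ᶠ s in nhdsWithin 1 (Set.Iio 1), slope f 1 s < f'/2 ∧ s < 1 :=
    hev.and (eventually_mem_nhdsWithin)
  apply left_interval_of_eventually
  filter_upwards [h2] with s hs
  rcases hs with ⟨hslope, hs1⟩
  rw [slope_def_field, h0, sub_zero] at hslope
  have hd : s - 1 < 0 := by linarith
  have := (div_lt_iff_of_neg hd).mp hslope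
  nlinarith

lemma bb_pos {p s : ℝ} (hp0 : 0 < p) (hp2 : p < 2) (hs : 0 ≤ s) : 0 < (2-p)*s+p := by
  nlinarith

lemma EE_continuousOn (α p : ℝ) (hp0 : 0 < p) (hp2 : p < 2) {u v : ℝ} (hu : 0 < u) :
    ContinuousOn (EE α p) (Set.Icc u v) := by
  intro s hs
  have hs0 : 0 < s := lt_of_lt_of_le hu hs.1
  exact ((hasDerivAt_EE α p (bb_pos hp0 hp2 hs0.le) hs0).continuousAt).continuousWithinAt

lemma EE_strictAntiOn (α p : ℝ) (hp0 : 0 < p) (hp2 : p < 2) {u v : ℝ} (hu : 0 < u)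
    (huv : u < v) (hq : ∀ s, u < s → s < v → 0 < qq α p s) :
    StrictAntiOn (EE α p) (Set.Icc u v) := by
  apply strictAntiOn_of_deriv_neg (convex_Icc u v) (EE_continuousOn α p hp0 hp2 hu)
  intro s hs
  rw [interior_Icc] at hs
  have hs0 : 0 < s := lt_trans hu hs.1
  have hb := bb_pos hp0 hp2 hs0.le
  rw [(hasDerivAt_EE α p hb hs0).deriv]
  apply div_neg_of_neg_of_pos
  · exact neg_lt_zero.mpr (hq s hs.1 hs.2)
  · positivity

lemma EE_strictMonoOn (α p : ℝ) (hp0 : 0 < p) (hp2 : p < 2) {u v : ℝ} (hu : 0 < u)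
    (huv : u < v) (hq : ∀ s, u < s → s < v → qq α p s < 0) :
    StrictMonoOn (EE α p) (Set.Icc u v) := by
  apply strictMonoOn_of_deriv_pos (convex_Icc u v) (EE_continuousOn α p hp0 hp2 hu)
  intro s hs
  rw [interior_Icc] at hs
  have hs0 : 0 < s := lt_trans hu hs.1
  have hb := bb_pos hp0 hp2 hs0.le
  rw [(hasDerivAt_EE α p hb hs0).deriv]
  apply div_pos
  · exact neg_pos.mpr (hq s hs.1 hs.2)
  · positivity

lemma EE_log_form (α p : ℝ) {s : ℝ} (hp0 : 0 < p) (hp2 : p < 2) (hs : 0 < s) :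
    EE α p s = Real.log (((2-p)*s+p)^2) - Real.log (4*s*Real.exp (α*(s-1))) := by
  unfold EE
  have hb := bb_pos hp0 hp2 hs.le
  rw [Real.log_pow, Real.log_mul (by positivity) (Real.exp_ne_zero _),
    Real.log_mul (by norm_num) (ne_of_gt hs), Real.log_exp]
  push_cast
  ring

lemma DD_pos_of_EE_pos (α p : ℝ) {s : ℝ} (hp0 : 0 < p) (hp2 : p < 2) (hs : 0 < s)
    (h : 0 < EE α p s) : 0 < DD α p s := by
  rw [EE_log_form α p hp0 hp2 hs, sub_pos] at h
  have hb := bb_pos hp0 hp2 hs.le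
  have h4 : (0:ℝ) < 4*s*Real.exp (α*(s-1)) := by positivity
  have := (Real.log_lt_log_iff h4 (by positivity)).mp h
  unfold DD
  nlinarith

lemma EE_eq_zero_of_DD_eq_zero (α p : ℝ) {s : ℝ} (hp0 : 0 < p) (hp2 : p < 2) (hs : 0 < s)
    (h : DD α p s = 0) : EE α p s = 0 := by
  rw [EE_log_form α p hp0 hp2 hs]
  unfold DD at h
  have : ((2-p)*s+p)^2 = 4*s*Real.exp (α*(s-1)) := by linarith
  rw [this, sub_self]

lemma EE_one (α p : ℝ) (hp0 : 0 < p) (hp2 : p < 2) : EE α p 1 = 0 := by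
  unfold EE
  have h1 : (2-p)*1+p = 2 := by ring
  rw [h1]
  have h4 : Real.log 4 = 2 * Real.log 2 := by
    rw [show (4:ℝ) = 2^2 by norm_num, Real.log_pow]
    push_cast
    ring
  rw [h4, Real.log_one]
  ring

theorem main_analysis (α p : ℝ) (hα0 : Real.sqrt 2 - 1 < α) (hα1 : α < 1)
    (hp0 : 0 < p) (hp1 : p < 1) (G : ℝ → ℝ)
    (hquad : ∀ s, 0 ≤ s → s ≤ 1 →
      G s ^ 2 - ((2-p)*s+p) * G s + s * Real.exp (α*(s-1)) = 0)
    (hcont : ContinuousOn G (Set.Icc 0 1))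
    (hle1 : ∀ s, 0 ≤ s → s ≤ 1 → G s ≤ 1)
    (hgep : ∀ s, 0 ≤ s → s ≤ 1 → p ≤ G s)
    (hG1 : G 1 = 1)
    (sp : ℝ)
    (hsp : sp = ((2 - p - α * p) -
      Real.sqrt ((2 - p - α * p) ^ 2 - 4 * α * p * (2 - p))) / (2 * α * (2 - p))) :
    sp ∈ Set.Ioo (0 : ℝ) 1 ∧
    (∀ s ∈ Set.Icc sp 1,
      G s = (1 / 2) * ((2 - p) * s + p -
        Real.sqrt (((2 - p) * s + p) ^ 2 - 4 * s * Real.exp (α * (s - 1))))) ∧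
    (∀ s ∈ Set.Ico (0 : ℝ) sp,
      G s = (1 / 2) * ((2 - p) * s + p +
        Real.sqrt (((2 - p) * s + p) ^ 2 - 4 * s * Real.exp (α * (s - 1))))) := by
  have hsqrt2_pos : (0:ℝ) < Real.sqrt 2 := Real.sqrt_pos.mpr (by norm_num)
  have hsqrt2_gt1 : (1:ℝ) < Real.sqrt 2 := by
    have : Real.sqrt 1 < Real.sqrt 2 := Real.sqrt_lt_sqrt (by norm_num) (by norm_num)
    simpa using this
  have hα01 : 0 < α := by linarith
  have hαkey : 0 < α^2 + 2*α - 1 := by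
    have hs2 : Real.sqrt 2 ^ 2 = 2 := Real.sq_sqrt (by norm_num)
    nlinarith [hα0, hsqrt2_pos]
  have hp2 : p < 2 := by linarith
  have h2p : 0 < 2 - p := by linarith
  -- square identity
  have hsq : ∀ s, 0 ≤ s → s ≤ 1 → (2*G s - ((2-p)*s+p))^2 = DD α p s := by
    intro s h0 h1
    have := hquad s h0 h1
    unfold DD
    nlinarith [this]
  have hDnn : ∀ s, 0 ≤ s → s ≤ 1 → 0 ≤ DD α p s := by
    intro s h0 h1
    rw [← hsq s h0 h1]
    exact sq_nonneg _
  have hexp0 : Real.exp (α*(1-1)) = 1 := by rw [show α*(1-1) = 0 by ring, Real.exp_zero]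
  have hD1 : DD α p 1 = 0 := by unfold DD; rw [hexp0]; ring
  have hDd1 : Dd α p 1 = 4*(1-p-α) := by unfold Dd; rw [hexp0]; ring
  -- p ≥ 1 - α
  have hDd1_le : Dd α p 1 ≤ 0 :=
    slope_le_zero_left (hasDerivAt_DD α p 1) hD1 (fun s h0 h1' => hDnn s h0.le h1'.le)
  have hp1α : 1 - α ≤ p := by rw [hDd1] at hDd1_le; linarith
  have hp1α' : 1 - α < p := by
    rcases lt_or_eq_of_le hp1α with h | h
    · exact h
    · exfalso
      have hDd1_0 : Dd α p 1 = 0 := by rw [hDd1, ← h]; ring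
      have hDdd1 : Ddd α p 1 < 0 := by
        unfold Ddd
        rw [hexp0]
        nlinarith [hαkey]
      obtain ⟨v, hv0, hv1, hvP⟩ :=
        eventually_gt_slope_left (hasDerivAt_Dd α p 1) hDd1_0 hDdd1
      set v' := (v+1)/2 with hv'def
      have hvv' : v < v' := by rw [hv'def]; linarith
      have hv'1 : v' < 1 := by rw [hv'def]; linarith
      have hv'0 : 0 ≤ v' := by rw [hv'def]; linarith
      have hmono : StrictMonoOn (DD α p) (Set.Icc v' 1) := by
        apply strictMonoOn_of_deriv_pos (convex_Icc v' 1)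
        · intro s _
          exact (hasDerivAt_DD α p s).continuousAt.continuousWithinAt
        · intro s hs
          rw [interior_Icc] at hs
          rw [(hasDerivAt_DD α p s).deriv]
          have := hvP s (lt_trans hvv' hs.1) hs.2
          nlinarith [hDdd1, hs.2]
      have hlt := hmono (Set.left_mem_Icc.mpr hv'1.le) (Set.right_mem_Icc.mpr hv'1.le) hv'1
      rw [hD1] at hlt
      exact absurd hlt (not_lt.mpr (hDnn v' hv'0 hv'1.le))
  -- near-1 negative region for h
  have hκpos : 0 < 2*(p+α-1) := by linarith
  have hDd1neg : Dd α p 1 < 0 := by rw [hDd1]; linarith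
  obtain ⟨v, hv0, hv1, hvD⟩ := eventually_gt_slope_left (hasDerivAt_DD α p 1) hD1 hDd1neg
  have hvD' : ∀ s, v < s → s < 1 → 2*(p+α-1)*(1-s) < DD α p s := by
    intro s h1 h2
    have := hvD s h1 h2
    rw [hDd1] at this
    nlinarith [this]
  set w := max v (1 - 2*(p+α-1)/(2-p)^2) with hwdef
  have hw1 : w < 1 := by
    apply max_lt hv1
    have : 0 < 2*(p+α-1)/(2-p)^2 := by positivity
    linarith
  have hw0 : 0 ≤ w := le_trans hv0 (le_max_left _ _)
  have hneg : ∀ s, w < s → s < 1 → 2*G s - ((2-p)*s+p) < 0 := by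
    intro s hws hs1
    have hs0 : 0 ≤ s := le_trans hw0 hws.le
    have hDgt : (2-p)^2*(1-s)^2 < DD α p s := by
      have h1 := hvD' s (lt_of_le_of_lt (le_max_left _ _) hws) hs1
      have h2 : 1 - 2*(p+α-1)/(2-p)^2 < s := lt_of_le_of_lt (le_max_right _ _) hws
      have h3 : (2-p)^2*(1-s) < 2*(p+α-1) := by
        have hlt : 1 - s < 2*(p+α-1)/(2-p)^2 := by linarith
        calc (2-p)^2*(1-s) < (2-p)^2*(2*(p+α-1)/(2-p)^2) := by
              apply mul_lt_mul_of_pos_left hlt (by positivity)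
          _ = 2*(p+α-1) := by field_simp
      nlinarith [h1, h3, hs1]
    by_contra hcon
    push_neg at hcon
    have hub : 2*G s - ((2-p)*s+p) ≤ (2-p)*(1-s) := by
      have := hle1 s hs0 hs1.le
      nlinarith [this]
    have := hsq s hs0 hs1.le
    nlinarith [hcon, hub, hDgt, this]
  -- existence of a zero of h
  set s₀ := p/(2*(2-p)) with hs₀def
  have hs₀pos : 0 < s₀ := by rw [hs₀def]; positivity
  have hs₀lt : s₀ < 1/2 := by
    rw [hs₀def, div_lt_iff₀ (by positivity)]
    nlinarith
  have hh0 : 0 < 2*G s₀ - ((2-p)*s₀+p) := by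
    have hg := hgep s₀ hs₀pos.le (by linarith)
    have : (2-p)*s₀ = p/2 := by rw [hs₀def]; field_simp
    nlinarith [hg, this]
  set s₁ := (max w s₀ + 1)/2 with hs₁def
  have hs₁w : w < s₁ := by
    have := le_max_left w s₀
    rw [hs₁def]
    have := max_lt hw1 (by linarith : s₀ < 1)
    linarith [le_max_left w s₀]
  have hs₁0 : s₀ < s₁ := by
    have := le_max_right w s₀
    have := max_lt hw1 (by linarith : s₀ < 1)
    rw [hs₁def]
    linarith
  have hs₁1 : s₁ < 1 := by
    have := max_lt hw1 (by linarith : s₀ < 1)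
    rw [hs₁def]
    linarith
  have hh1 : 2*G s₁ - ((2-p)*s₁+p) < 0 := hneg s₁ hs₁w hs₁1
  have hconth : ContinuousOn (fun s => 2*G s - ((2-p)*s+p)) (Set.Icc 0 1) := by
    apply ContinuousOn.sub
    · exact continuousOn_const.mul hcont
    · exact ((continuous_const.mul continuous_id).add continuous_const).continuousOn
  have hivt := intermediate_value_Icc' hs₁0.le
    (hconth.mono (Set.Icc_subset_Icc hs₀pos.le hs₁1.le))
  have h0mem : (0:ℝ) ∈ Set.Icc (2*G s₁ - ((2-p)*s₁+p)) (2*G s₀ - ((2-p)*s₀+p)) :=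
    ⟨hh1.le, hh0.le⟩
  obtain ⟨r, hrmem, hr0⟩ := hivt h0mem
  have hr_in : r ∈ Set.Ioo (0:ℝ) 1 :=
    ⟨lt_of_lt_of_le hs₀pos hrmem.1, lt_of_le_of_lt hrmem.2 hs₁1⟩
  have hr0' : 2*G r - ((2-p)*r+p) = 0 := hr0
  have hDr : DD α p r = 0 := by
    rw [← hsq r hr_in.1.le hr_in.2.le, hr0']
    norm_num
  -- q r = 0
  have hDdr : Dd α p r = 0 := by
    have hlocmin : IsLocalMin (DD α p) r := by
      have hmem : Set.Ioo (0:ℝ) 1 ∈ nhds r := isOpen_Ioo.mem_nhds hr_in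
      filter_upwards [hmem] with x hx
      rw [hDr]
      exact hDnn x hx.1.le hx.2.le
    exact hlocmin.hasDerivAt_eq_zero (hasDerivAt_DD α p r)
  have hBr : 0 < (2-p)*r+p := bb_pos hp0 hp2 hr_in.1.le
  have hXr : 0 < Real.exp (α*(r-1)) := Real.exp_pos _
  have h1αr : 0 < 1 + α*r := by nlinarith [hr_in.1, hα01]
  have hqr : qq α p r = 0 := by
    have e1 : ((2-p)*r+p)^2 - 4*r*Real.exp (α*(r-1)) = 0 := hDr
    have e2 : 2*((2-p)*r+p)*(2-p) - 4*(Real.exp (α*(r-1))*(1+α*r)) = 0 := hDdr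
    have e3 : ((2-p)*r+p)*(((2-p)*r+p)*(1+α*r) - 2*r*(2-p)) = 0 := by
      linear_combination (1+α*r)*e1 - r*e2
    have e4 : ((2-p)*r+p)*(1+α*r) - 2*r*(2-p) = 0 := by
      rcases mul_eq_zero.mp e3 with h | h
      · exact absurd h (ne_of_gt hBr)
      · exact h
    unfold qq
    linear_combination e4
  -- root structure
  have ha2 : 0 < α*(2-p) := by positivity
  set rp := (2-p-α*p)/(α*(2-p)) - r with hrpdef
  have hsumr : α*(2-p)*(r + rp) = 2-p-α*p := by
    rw [hrpdef]
    field_simp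
    ring
  have hprodr : α*(2-p)*r*rp = p := by
    have : α*(2-p)*r*rp = (2-p-α*p)*r - α*(2-p)*r^2 := by
      rw [hrpdef]
      field_simp
    rw [this]
    unfold qq at hqr
    linarith
  have hqfact : ∀ s, qq α p s = α*(2-p)*(s-r)*(s-rp) := by
    intro s
    unfold qq
    linear_combination s*hsumr - hprodr
  have hq1 : 0 < qq α p 1 := by
    have h : qq α p 1 = 2*(α+p-1) := by unfold qq; ring
    rw [h]
    linarith
  have hEr : EE α p r = 0 := EE_eq_zero_of_DD_eq_zero α p hp0 hp2 hr_in.1 hDr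
  have hE1 : EE α p 1 = 0 := EE_one α p hp0 hp2
  -- r < rp
  have hr_lt : r < rp := by
    by_contra hcon
    push_neg at hcon
    have hanti : StrictAntiOn (EE α p) (Set.Icc r 1) :=
      EE_strictAntiOn α p hp0 hp2 hr_in.1 hr_in.2 (fun t ht1 ht2 => by
        rw [hqfact t]
        exact mul_pos (mul_pos ha2 (by linarith)) (by linarith))
    have := hanti (Set.left_mem_Icc.mpr hr_in.2.le) (Set.right_mem_Icc.mpr hr_in.2.le) hr_in.2
    rw [hEr, hE1] at this
    exact lt_irrefl 0 this
  have hrp1 : rp < 1 := by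
    by_contra hcon
    push_neg at hcon
    have hle : qq α p 1 ≤ 0 := by
      rw [hqfact 1]
      apply mul_nonpos_of_nonneg_of_nonpos
      · exact (mul_pos ha2 (by linarith [hr_in.2] : (0:ℝ) < 1 - r)).le
      · linarith
    linarith
  have hrp0 : 0 < rp := lt_trans hr_in.1 hr_lt
  -- D positive away from r
  have hDpos : ∀ s, 0 < s → s < 1 → s ≠ r → 0 < DD α p s := by
    intro s hs0 hs1 hne
    apply DD_pos_of_EE_pos α p hp0 hp2 hs0
    rcases lt_or_gt_of_ne hne with hlt | hgt
    · have hanti : StrictAntiOn (EE α p) (Set.Icc s r) :=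
        EE_strictAntiOn α p hp0 hp2 hs0 hlt (fun t ht1 ht2 => by
          rw [hqfact t]
          exact mul_pos_of_neg_of_neg
            (mul_neg_of_pos_of_neg ha2 (by linarith)) (by linarith))
      have := hanti (Set.left_mem_Icc.mpr hlt.le) (Set.right_mem_Icc.mpr hlt.le) hlt
      rw [hEr] at this
      exact this
    · rcases le_or_gt s rp with hle | hgt2
      · have hmono : StrictMonoOn (EE α p) (Set.Icc r s) :=
          EE_strictMonoOn α p hp0 hp2 hr_in.1 hgt (fun t ht1 ht2 => by
            rw [hqfact t]
            exact mul_neg_of_pos_of_neg (mul_pos ha2 (by linarith)) (by linarith))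
        have := hmono (Set.left_mem_Icc.mpr hgt.le) (Set.right_mem_Icc.mpr hgt.le) hgt
        rw [hEr] at this
        exact this
      · have hanti : StrictAntiOn (EE α p) (Set.Icc s 1) :=
          EE_strictAntiOn α p hp0 hp2 hs0 hs1 (fun t ht1 ht2 => by
            rw [hqfact t]
            exact mul_pos (mul_pos ha2 (by linarith)) (by linarith))
        have := hanti (Set.left_mem_Icc.mpr hs1.le) (Set.right_mem_Icc.mpr hs1.le) hs1
        rw [hE1] at this
        exact this
  -- identification of sp with r
  have hΔ : (2-p-α*p)^2 - 4*α*p*(2-p) = (2-p-α*p - 2*(α*(2-p))*r)^2 := by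
    have hqr' : α*(2-p)*r^2 - (2-p-α*p)*r + p = 0 := hqr
    linear_combination (-4*(α*(2-p)))*hqr'
  have hBpos : 0 < 2-p-α*p - 2*(α*(2-p))*r := by
    have h1 : 2-p-α*p - 2*(α*(2-p))*r = α*(2-p)*(rp - r) := by
      linear_combination (-1 : ℝ)*hsumr
    rw [h1]
    exact mul_pos ha2 (by linarith)
  have hsqrtΔ : Real.sqrt ((2-p-α*p)^2 - 4*α*p*(2-p)) = 2-p-α*p - 2*(α*(2-p))*r := by
    rw [hΔ]
    exact Real.sqrt_sq hBpos.le
  have hsp_r : sp = r := by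
    rw [hsp, hsqrtΔ]
    field_simp
    ring
  refine ⟨by rw [hsp_r]; exact hr_in, ?_, ?_⟩
  · -- branch Q₋ on [sp, 1]
    intro s hs
    rw [hsp_r] at hs
    have hs0 : 0 ≤ s := le_trans hr_in.1.le hs.1
    have hDDs : ((2-p)*s+p)^2 - 4*s*Real.exp (α*(s-1)) = DD α p s := rfl
    suffices hle : 2*G s - ((2-p)*s+p) ≤ 0 by
      rw [hDDs, ← hsq s hs0 hs.2, Real.sqrt_sq_eq_abs, abs_of_nonpos hle]
      ring
    rcases eq_or_lt_of_le hs.1 with heq | hgt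
    · have h0 : (2*G s - ((2-p)*s+p))^2 = 0 := by
        rw [hsq s hs0 hs.2, ← heq]
        exact hDr
      have := pow_eq_zero_iff (n := 2) (by norm_num) |>.mp h0
      linarith [this.le]
    · rcases eq_or_lt_of_le hs.2 with heq1 | hlt1
      · rw [heq1, hG1]
        linarith
      · -- r < s < 1 : show h s < 0
        by_contra hcon
        push_neg at hcon
        set s₂ := (max w s + 1)/2 with hs₂def
        have hmax1 : max w s < 1 := max_lt hw1 hlt1
        have hs₂w : w < s₂ := by
          rw [hs₂def]
          have := le_max_left w s
          linarith
        have hs₂s : s < s₂ := by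
          rw [hs₂def]
          have := le_max_right w s
          linarith
        have hs₂1 : s₂ < 1 := by
          rw [hs₂def]
          linarith
        have hh2 : 2*G s₂ - ((2-p)*s₂+p) < 0 := hneg s₂ hs₂w hs₂1
        have hivt2 := intermediate_value_Icc' hs₂s.le
          (hconth.mono (Set.Icc_subset_Icc hs0 hs₂1.le))
        obtain ⟨t, htmem, ht0⟩ := hivt2 (Set.mem_Icc.mpr ⟨hh2.le, hcon.le⟩)
        have ht0' : 2*G t - ((2-p)*t+p) = 0 := ht0
        have htin : t ∈ Set.Ioo (0:ℝ) 1 :=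
          ⟨lt_of_lt_of_le (lt_trans hr_in.1 hgt) htmem.1, lt_of_le_of_lt htmem.2 hs₂1⟩
        have htner : t ≠ r := by
          have : r < t := lt_of_lt_of_le hgt htmem.1
          exact ne_of_gt this
        have hpos := hDpos t htin.1 htin.2 htner
        have : DD α p t = 0 := by
          rw [← hsq t htin.1.le htin.2.le, ht0']
          norm_num
        linarith
  · -- branch Q₊ on [0, sp)
    intro s hs
    rw [hsp_r] at hs
    have hs1 : s ≤ 1 := le_trans hs.2.le hr_in.2.le
    have hDDs : ((2-p)*s+p)^2 - 4*s*Real.exp (α*(s-1)) = DD α p s := rfl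
    suffices hge : 0 ≤ 2*G s - ((2-p)*s+p) by
      rw [hDDs, ← hsq s hs.1 hs1, Real.sqrt_sq_eq_abs, abs_of_nonneg hge]
      ring
    rcases eq_or_lt_of_le hs.1 with heq | hgt
    · -- s = 0
      have hG0 : G 0 = p := by
        have hq0 := hquad 0 le_rfl zero_le_one
        have hg0 := hgep 0 le_rfl zero_le_one
        have h00 : G 0 * (G 0 - p) = 0 := by linear_combination hq0
        rcases mul_eq_zero.mp h00 with h | h
        · linarith
        · linarith
      rw [← heq, hG0]
      simp only [mul_zero, zero_add]
      linarith
    · -- 0 < s < r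
      by_contra hcon
      push_neg at hcon
      set u := min (s/2) s₀ with hudef
      have hu0 : 0 < u := lt_min (by linarith) hs₀pos
      have hus : u < s := lt_of_le_of_lt (min_le_left _ _) (by linarith)
      have huh : 0 < 2*G u - ((2-p)*u+p) := by
        have hu1 : u ≤ 1 := by
          have := min_le_right (s/2) s₀
          linarith [hs₀lt]
        have hg := hgep u hu0.le hu1
        have hub : (2-p)*u ≤ p/2 := by
          have h1 : u ≤ s₀ := min_le_right _ _
          have h2 : (2-p)*s₀ = p/2 := by rw [hs₀def]; field_simp
          calc (2-p)*u ≤ (2-p)*s₀ := mul_le_mul_of_nonneg_left h1 h2p.le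
            _ = p/2 := h2
        linarith [hg, hub, hp0]
      have hivt3 := intermediate_value_Icc' hus.le
        (hconth.mono (Set.Icc_subset_Icc hu0.le hs1))
      obtain ⟨t, htmem, ht0⟩ := hivt3 (Set.mem_Icc.mpr ⟨hcon.le, huh.le⟩)
      have ht0' : 2*G t - ((2-p)*t+p) = 0 := ht0
      have htin : t ∈ Set.Ioo (0:ℝ) 1 :=
        ⟨lt_of_lt_of_le hu0 htmem.1, lt_of_le_of_lt htmem.2 (lt_of_lt_of_le hs.2 hr_in.2.le)⟩
      have htner : t ≠ r := ne_of_lt (lt_of_le_of_lt htmem.2 hs.2)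
      have hposD := hDpos t htin.1 htin.2 htner
      have : DD α p t = 0 := by
        rw [← hsq t htin.1.le htin.2.le, ht0']
        norm_num
      linarith

/-- For √2 − 1 < α < 1, with
s_p := ((2 − p − αp) − √((2 − p − αp)² − 4αp(2−p)))/(2α(2−p)), we have s_p ∈ (0,1),
G = Q₋ on [s_p, 1] and G = Q₊ on [0, s_p). -/
theorem pgf_branches_large_alpha
    (α : ℝ) (hα0 : Real.sqrt 2 - 1 < α) (hα1 : α < 1)
    (μ : ℕ → ℝ≥0∞) (hμ : SatisfiesRDE α μ)
    (p : ℝ) (hp : p = (μ 0).toReal)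
    (sp : ℝ)
    (hsp : sp = ((2 - p - α * p) -
      Real.sqrt ((2 - p - α * p) ^ 2 - 4 * α * p * (2 - p))) / (2 * α * (2 - p))) :
    sp ∈ Set.Ioo (0 : ℝ) 1 ∧
    (∀ s ∈ Set.Icc sp 1,
      pgf μ s = (1 / 2) * ((2 - p) * s + p -
        Real.sqrt (((2 - p) * s + p) ^ 2 - 4 * s * Real.exp (α * (s - 1))))) ∧
    (∀ s ∈ Set.Ico (0 : ℝ) sp,
      pgf μ s = (1 / 2) * ((2 - p) * s + p +
        Real.sqrt (((2 - p) * s + p) ^ 2 - 4 * s * Real.exp (α * (s - 1))))) := by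
  have hα01 : 0 < α := by
    have : (1:ℝ) < Real.sqrt 2 := by
      have : Real.sqrt 1 < Real.sqrt 2 := Real.sqrt_lt_sqrt (by norm_num) (by norm_num)
      simpa using this
    linarith
  apply main_analysis α p hα0 hα1 (hp ▸ mu0_pos hμ) (hp ▸ mu0_lt_one hμ hα01) (pgf μ)
    ?_ (pgf_continuousOn hμ.1) (fun s h0 h1 => pgf_le_one hμ.1 h0 h1)
    (fun s h0 h1 => hp ▸ pgf_ge_p hμ.1 h0 h1) (pgf_one hμ.1) sp hsp
  intro s h0 h1
  rw [hp]
  exact pgf_quadratic hμ hα01.le h0 h1
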